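/- arXiv:2102.12474 — 3 statements merged into one kernel-verified Lean document; each statement's English description precedes it below -/
import Mathlib

section
/- For every complex symmetric N×N matrix B and every K ≥ N, there exists an N×K complex matrix X such that B = X·Xᵀ, where Xᵀ is the (non-conjugate) transpose of X. -/
open Matrix

/-- Every complex symmetric `N × N` matrix `B` admits, for every `K ≥ N`,
a decomposition `B = X · Xᵀ` with `X` an `N × K` complex matrix. -/
theorem symm_eq_XXT {N K : ℕ} (hK : N ≤ K)
    (B : Matrix (Fin N) (Fin N) ℂ) (hB : Bᵀ = B) :
    ∃ X : Matrix (Fin N) (Fin K) ℂ, B = X * Xᵀ := by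
  classical
  -- symmetric bilinear form associated to B
  set form : LinearMap.BilinForm ℂ (Fin N → ℂ) := Matrix.toBilin' B with hform
  have hsymm : form.IsSymm := by
    rw [LinearMap.BilinForm.isSymm_def]
    intro x y
    simp only [hform, Matrix.toBilin'_apply', RingHom.id_apply]
    calc x ⬝ᵥ B *ᵥ y = Bᵀ *ᵥ x ⬝ᵥ y := by
          rw [Matrix.dotProduct_mulVec, ← Matrix.mulVec_transpose]
    _ = y ⬝ᵥ B *ᵥ x := by rw [hB, dotProduct_comm]
  obtain ⟨v0, hv0⟩ := LinearMap.BilinForm.exists_orthogonal_basis (LinearMap.BilinForm.isSymm_iff.1 hsymm)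
  have hrank : Module.finrank ℂ (Fin N → ℂ) = N := Module.finrank_fin_fun ℂ
  let v : Module.Basis (Fin N) ℂ (Fin N → ℂ) := v0.reindex (finCongr hrank)
  have hv : form.IsOrthoᵢ v := by
    intro i j hij
    have hne : (finCongr hrank).symm i ≠ (finCongr hrank).symm j := fun h =>
      hij (by simpa using congrArg (finCongr hrank) h)
    simpa [v, Module.Basis.coe_reindex, Function.onFun] using hv0 hne
  -- the matrix of the form in basis v is diagonal
  set D : Matrix (Fin N) (Fin N) ℂ := LinearMap.BilinForm.toMatrix v form with hD
  have hDdiag : D = Matrix.diagonal (fun i => form (v i) (v i)) := by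
    ext i j
    by_cases hij : i = j
    · subst hij; simp [hD, BilinForm.toMatrix_apply]
    · rw [hD, BilinForm.toMatrix_apply, Matrix.diagonal_apply_ne _ hij]
      exact hv hij
  -- square roots of diagonal entries
  have hsq : ∀ i : Fin N, ∃ c : ℂ, c * c = form (v i) (v i) := by
    intro i
    obtain ⟨c, hc⟩ := IsAlgClosed.exists_pow_nat_eq (form (v i) (v i)) (n := 2) (by norm_num)
    exact ⟨c, by rw [← hc]; ring⟩
  choose c hc using hsq
  set E : Matrix (Fin N) (Fin N) ℂ := Matrix.diagonal c with hE
  have hED : Eᵀ * E = D := by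
    rw [hE, hDdiag, Matrix.diagonal_transpose, Matrix.diagonal_mul_diagonal]
    exact congrArg _ (funext fun i => hc i)
  -- change of basis back to the standard basis
  set Q : Matrix (Fin N) (Fin N) ℂ := v.toMatrix (Pi.basisFun ℂ (Fin N)) with hQ
  have hBD : Qᵀ * D * Q = B := by
    rw [hQ, hD, BilinForm.toMatrix_mul_basis_toMatrix, hform,
      BilinForm.toMatrix_basisFun, LinearMap.BilinForm.toMatrix'_toBilin']
  set Y : Matrix (Fin N) (Fin N) ℂ := Qᵀ * Eᵀ with hY
  have hYY : B = Y * Yᵀ := by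
    rw [hY, Matrix.transpose_mul, Matrix.transpose_transpose, ← hBD, ← hED]
    noncomm_ring
  -- pad Y with zero columns
  set J : Matrix (Fin N) (Fin K) ℂ := fun i k => if k = Fin.castLE hK i then 1 else 0 with hJ
  have hJJ : J * Jᵀ = 1 := by
    ext i j
    rw [Matrix.mul_apply]; simp only [Matrix.transpose_apply]
    simp only [Matrix.mul_apply, Matrix.transpose_apply, hJ, ite_mul, one_mul, zero_mul]
    rw [Finset.sum_ite_eq' Finset.univ (Fin.castLE hK i)]
    simp [Matrix.one_apply, Fin.castLE_inj, eq_comm]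
  refine ⟨Y * J, ?_⟩
  rw [Matrix.transpose_mul, Matrix.mul_assoc, ← Matrix.mul_assoc J, hJJ, Matrix.one_mul, ← hYY]
end

section
/- Let N be a positive even integer, M a positive integer, and K a positive integer. Suppose Y is an N×K complex matrix each of whose entries has the form (x + i·y)/√M with x, y ∈ ℤ. Then M^N · |Haf(Y·Yᵀ)|² is a nonnegative integer; that is, there exists k ∈ ℕ with |Haf(Y·Yᵀ)|² = k / M^N. -/
open Matrix BigOperators

/-- The Hafnian of an `m × m` complex matrix: the sum over all perfect matchings
(encoded as fixed-point-free involutive permutations) of the products of the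
matrix entries over the pairs of the matching. -/
noncomputable def hafnian {m : ℕ} (B : Matrix (Fin m) (Fin m) ℂ) : ℂ :=
  ∑ σ ∈ Finset.univ.filter
      (fun σ : Equiv.Perm (Fin m) => σ * σ = 1 ∧ ∀ i, σ i ≠ i),
    ∏ i ∈ Finset.univ.filter (fun i : Fin m => i < σ i), B i (σ i)

lemma card_filter_lt {m : ℕ} (σ : Equiv.Perm (Fin m)) (h1 : σ * σ = 1)
    (h2 : ∀ i, σ i ≠ i) :
    (Finset.univ.filter (fun i : Fin m => i < σ i)).card * 2 = m := by
  have hinv : ∀ i, σ (σ i) = i := by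
    intro i
    have := congrFun (congrArg (fun p : Equiv.Perm (Fin m) => p.toFun) h1) i
    simpa using this
  have hcard : (Finset.univ.filter (fun i : Fin m => i < σ i)).card
      = (Finset.univ.filter (fun i : Fin m => σ i < i)).card := by
    apply Finset.card_bij (fun i _ => σ i)
    · intro a ha
      simp only [Finset.mem_filter, Finset.mem_univ, true_and] at ha ⊢
      rw [hinv]; exact ha
    · intro a ha b hb hab
      exact σ.injective hab
    · intro b hb
      simp only [Finset.mem_filter, Finset.mem_univ, true_and] at hb ⊢
      exact ⟨σ b, by rw [hinv]; exact hb, hinv b⟩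
  have hsplit := Finset.card_filter_add_card_filter_not
    (s := (Finset.univ : Finset (Fin m))) (p := fun i => i < σ i)
  have heq : Finset.univ.filter (fun i : Fin m => ¬ i < σ i)
      = Finset.univ.filter (fun i : Fin m => σ i < i) := by
    apply Finset.filter_congr
    intro i _
    simp only [not_lt, eq_iff_iff]
    constructor
    · intro h; exact lt_of_le_of_ne h (h2 i)
    · intro h; exact le_of_lt h
  rw [heq, ← hcard] at hsplit
  simpa [mul_two, Finset.card_univ] using hsplit

/-- If every entry of the `N × K` matrix `Y` has the form `(x + i·y)/√M` with
`x, y ∈ ℤ`, then `M^N · |Haf(Y·Yᵀ)|²` is a nonnegative integer. -/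
theorem haf_sq_integer_multiple {N M K : ℕ} (hN : 0 < N) (hNe : Even N)
    (hM : 0 < M) (hK : 0 < K) (Y : Matrix (Fin N) (Fin K) ℂ)
    (hY : ∀ a b, ∃ x y : ℤ,
      Y a b = ((x : ℂ) + Complex.I * (y : ℂ)) / (Real.sqrt M : ℂ)) :
    ∃ k : ℕ, ‖hafnian (Y * Yᵀ)‖ ^ 2 = (k : ℝ) / (M : ℝ) ^ N := by
  obtain ⟨n, hn⟩ := hNe
  have hNn : N = 2 * n := by omega
  have hsM : (Real.sqrt M : ℝ) ≠ 0 := by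
    positivity
  -- the Gaussian-integer subring of ℂ
  set S : Subring ℂ := GaussianInt.toComplex.range with hS
  -- Z = √M • Y has Gaussian integer entries
  have hZ : ∀ a b, ((Real.sqrt M : ℂ) * Y a b) ∈ S := by
    intro a b
    obtain ⟨x, y, hxy⟩ := hY a b
    refine ⟨⟨x, y⟩, ?_⟩
    rw [GaussianInt.toComplex_def', hxy, mul_div_cancel₀]
    · ring
    · exact_mod_cast hsM
  -- entries of M * (Y * Yᵀ) are in S
  have hMYY : ∀ i j, ((M : ℂ) * (Y * Yᵀ) i j) ∈ S := by
    intro i j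
    have : (M : ℂ) * (Y * Yᵀ) i j
        = ∑ b, ((Real.sqrt M : ℂ) * Y i b) * ((Real.sqrt M : ℂ) * Y j b) := by
      simp only [Matrix.mul_apply, Matrix.transpose_apply, Finset.mul_sum]
      congr 1; funext b
      have hsq : ((Real.sqrt M : ℂ)) * (Real.sqrt M : ℂ) = (M : ℂ) := by
        rw [← Complex.ofReal_mul, Real.mul_self_sqrt (by positivity)]
        norm_cast
      rw [← hsq]; ring
    rw [this]
    exact Subring.sum_mem _ (fun b _ => Subring.mul_mem _ (hZ i b) (hZ j b))
  -- M^n * hafnian (Y * Yᵀ) ∈ S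
  have hhaf : (M : ℂ) ^ n * hafnian (Y * Yᵀ) ∈ S := by
    rw [hafnian, Finset.mul_sum]
    apply Subring.sum_mem
    intro σ hσ
    simp only [Finset.mem_filter, Finset.mem_univ, true_and] at hσ
    have hcard := card_filter_lt σ hσ.1 hσ.2
    have : (M : ℂ) ^ n *
        ∏ i ∈ Finset.univ.filter (fun i : Fin N => i < σ i), (Y * Yᵀ) i (σ i)
        = ∏ i ∈ Finset.univ.filter (fun i : Fin N => i < σ i),
            ((M : ℂ) * (Y * Yᵀ) i (σ i)) := by
      rw [Finset.prod_mul_distrib, Finset.prod_const]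
      congr 2
      omega
    rw [this]
    exact Subring.prod_mem _ (fun i _ => hMYY i (σ i))
  obtain ⟨g, hg⟩ := hhaf
  -- norm of g
  refine ⟨g.norm.toNat, ?_⟩
  have hgnorm : (g.norm.toNat : ℝ) = Complex.normSq (g : ℂ) := by
    rw [← GaussianInt.intCast_real_norm]
    norm_cast
    exact Int.toNat_of_nonneg (Zsqrtd.norm_nonneg (by norm_num) g)
  have habs : ‖(g : ℂ)‖ ^ 2
      = (M : ℝ) ^ N * ‖hafnian (Y * Yᵀ)‖ ^ 2 := by
    rw [hg, norm_mul, mul_pow, norm_pow, Complex.norm_natCast, ← pow_mul]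
    congr 2
    omega
  have hMN : (0 : ℝ) < (M : ℝ) ^ N := by positivity
  rw [hgnorm, ← Complex.sq_norm, habs]
  field_simp
end

section
/- For every real number r and every positive integer K, the lossless photon-number distribution attains its maximum at the photon number n* = 2·⌊(K−1)·sinh²(r)⌋; that is, setting j* = ⌊(K−1)·sinh²(r)⌋, for all j ∈ ℕ one has C(K+j−1, j) · tanh(r)^{2j} ≤ C(K+j*−1, j*) · tanh(r)^{2j*}. -/
open Real

/-- The lossless photon-number distribution attains its maximum at
`n* = 2·⌊(K−1)·sinh²(r)⌋`: with `j* = ⌊(K−1)·sinh²(r)⌋`, for every `j` we have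
`C(K+j−1, j)·tanh(r)^{2j} ≤ C(K+j*−1, j*)·tanh(r)^{2j*}`. -/
theorem lossless_distribution_mode (r : ℝ) (K : ℕ) (hK : 0 < K) :
    ∀ j : ℕ,
      ((K + j - 1).choose j : ℝ) * Real.tanh r ^ (2 * j)
        ≤ ((K + (⌊((K : ℝ) - 1) * Real.sinh r ^ 2⌋₊) - 1).choose
              (⌊((K : ℝ) - 1) * Real.sinh r ^ 2⌋₊) : ℝ)
          * Real.tanh r ^ (2 * ⌊((K : ℝ) - 1) * Real.sinh r ^ 2⌋₊) := by
  have hc : Real.cosh r ≠ 0 := (Real.cosh_pos r).ne'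
  set s : ℝ := Real.sinh r ^ 2 with hs
  set J : ℕ := ⌊((K : ℝ) - 1) * s⌋₊ with hJ
  set t2 : ℝ := Real.tanh r ^ 2 with ht2
  have ht20 : 0 ≤ t2 := sq_nonneg _
  have hs0 : 0 ≤ s := sq_nonneg _
  have hK1 : (0:ℝ) ≤ (K:ℝ) - 1 := by
    have : (1:ℝ) ≤ K := by exact_mod_cast hK
    linarith
  have hx0 : 0 ≤ ((K:ℝ) - 1) * s := mul_nonneg hK1 hs0
  have h1 : (1:ℝ) + s = Real.cosh r ^ 2 := by rw [hs, Real.cosh_sq]; ring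
  have h2 : Real.tanh r * Real.cosh r = Real.sinh r := by
    rw [Real.tanh_eq_sinh_div_cosh]; field_simp
  have ht2s : t2 * (1 + s) = s := by
    calc t2 * (1 + s) = (Real.tanh r * Real.cosh r) ^ 2 := by rw [h1, ht2]; ring
      _ = s := by rw [h2]
  set f : ℕ → ℝ := fun m => ((K + m - 1).choose m : ℝ) * t2 ^ m with hf
  have hchoose : ∀ m : ℕ, ((m + 1 : ℕ) : ℝ) * ((K + m).choose (m + 1) : ℝ)
      = ((K + m : ℕ) : ℝ) * ((K + m - 1).choose m : ℝ) := by
    intro m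
    have h := Nat.add_one_mul_choose_eq (K + m - 1) m
    have hKm : K + m - 1 + 1 = K + m := by omega
    rw [hKm] at h
    exact_mod_cast (mul_comm (m + 1) ((K + m).choose (m + 1))).trans h.symm
  have hup : ∀ m : ℕ, ((m : ℝ) + 1) ≤ ((K:ℝ) - 1) * s → f m ≤ f (m + 1) := by
    intro m hm
    have hab := hchoose m
    set a : ℝ := ((K + m - 1).choose m : ℝ) with ha
    set b : ℝ := ((K + m).choose (m + 1) : ℝ) with hb
    have ha0 : 0 ≤ a := Nat.cast_nonneg _
    have key : a ≤ b * t2 := by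
      have hpos : (0:ℝ) < 1 + s := by linarith
      rw [← mul_le_mul_iff_of_pos_right hpos]
      have : b * t2 * (1 + s) = b * s := by rw [mul_assoc, ht2s]
      rw [this]
      push_cast at hab
      nlinarith [hab, hm, ha0, hs0]
    have : f m = a * t2 ^ m := rfl
    have hfm1 : f (m + 1) = b * t2 * t2 ^ m := by
      show ((K + (m+1) - 1).choose (m+1) : ℝ) * t2 ^ (m+1) = b * t2 * t2 ^ m
      have : K + (m + 1) - 1 = K + m := by omega
      rw [this, pow_succ]; ring
    rw [this, hfm1]
    exact mul_le_mul_of_nonneg_right key (pow_nonneg ht20 m)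
  have hdown : ∀ m : ℕ, ((K:ℝ) - 1) * s < (m : ℝ) + 1 → f (m + 1) ≤ f m := by
    intro m hm
    have hab := hchoose m
    set a : ℝ := ((K + m - 1).choose m : ℝ) with ha
    set b : ℝ := ((K + m).choose (m + 1) : ℝ) with hb
    have ha0 : 0 ≤ a := Nat.cast_nonneg _
    have hb0 : 0 ≤ b := Nat.cast_nonneg _
    have key : b * t2 ≤ a := by
      have hpos : (0:ℝ) < 1 + s := by linarith
      rw [← mul_le_mul_iff_of_pos_right hpos]
      have : b * t2 * (1 + s) = b * s := by rw [mul_assoc, ht2s]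
      rw [this]
      push_cast at hab
      nlinarith [hab, hm, ha0, hb0, hs0]
    have hfm1 : f (m + 1) = b * t2 * t2 ^ m := by
      show ((K + (m+1) - 1).choose (m+1) : ℝ) * t2 ^ (m+1) = b * t2 * t2 ^ m
      have : K + (m + 1) - 1 = K + m := by omega
      rw [this, pow_succ]; ring
    rw [hfm1]
    show b * t2 * t2 ^ m ≤ a * t2 ^ m
    exact mul_le_mul_of_nonneg_right key (pow_nonneg ht20 m)
  have hle : ∀ n : ℕ, n ≤ J → f (J - n) ≤ f J := by
    intro n
    induction n with
    | zero => intro _; simp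
    | succ k ih =>
      intro hk
      have h1' : J - (k + 1) + 1 = J - k := by omega
      have hstep : f (J - (k + 1)) ≤ f (J - k) := by
        rw [← h1']
        apply hup
        have hle1 : ((J - (k+1) : ℕ) : ℝ) + 1 ≤ (J : ℝ) := by
          have : (J - (k+1)) + 1 ≤ J := by omega
          exact_mod_cast this
        have hle2 : (J : ℝ) ≤ ((K:ℝ) - 1) * s := Nat.floor_le hx0
        linarith
      exact hstep.trans (ih (by omega))
  have hge : ∀ n : ℕ, f (J + n) ≤ f J := by
    intro n
    induction n with
    | zero => simp
    | succ k ih =>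
      have hstep : f (J + k + 1) ≤ f (J + k) := by
        apply hdown
        have hlt : ((K:ℝ) - 1) * s < (J : ℝ) + 1 := Nat.lt_floor_add_one _
        have : (J : ℝ) ≤ ((J + k : ℕ) : ℝ) := by exact_mod_cast Nat.le_add_right J k
        push_cast at this ⊢
        linarith
      have : J + (k + 1) = J + k + 1 := by omega
      rw [this]
      exact hstep.trans ih
  intro j
  rw [pow_mul, pow_mul, ← ht2]
  show f j ≤ f J
  rcases le_or_gt j J with h | h
  · have := hle (J - j) (by omega)
    have hjj : J - (J - j) = j := by omega
    rwa [hjj] at this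
  · have := hge (j - J)
    have hjj : J + (j - J) = j := by omega
    rwa [hjj] at this
end
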